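/- Suppose p > 1, n ≥ 4, and a best-worst method matrix satisfies: a_{Bk} ≥ p for all k ≠ B; a_{kW} ≥ p for all k ≠ W; a_{BW} ≥ a_{jW} and a_{BW} ≥ a_{Bj} for all j ≠ B,W; and every entry is at most p^{4/(n−3) + 3}. Then the logarithmic least squares priorities contain no ordinal violation: w_B is maximal and w_W is minimal among all weights. -/

import Mathlib

open Finset

/-- Theorem 2 of the paper: if moreover `a_{BW}` is the largest
comparison and every entry is at most `p^{4/(n−3)+3}`, then the LLSM priorities
contain no ordinal violation. -/
theorem bwm_llsm_no_ordinal_violation' (n : ℕ) (hn : 4 ≤ n) (p : ℝ) (hp : 1 < p)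
    (B W : Fin n) (hBW : B ≠ W)
    (a : Fin n → Fin n → ℝ)
    (hpos : ∀ i j : Fin n, (i = B ∨ i = W ∨ j = B ∨ j = W) → 0 < a i j)
    (hdiag : ∀ i, a i i = 1)
    (hrec : ∀ i j : Fin n, (i = B ∨ i = W ∨ j = B ∨ j = W) → a i j * a j i = 1)
    (hB : ∀ k, k ≠ B → p ≤ a B k)
    (hW : ∀ k, k ≠ W → p ≤ a k W)
    (hmaxW : ∀ j, j ≠ B → j ≠ W → a j W ≤ a B W)
    (hmaxB : ∀ j, j ≠ B → j ≠ W → a B j ≤ a B W)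
    (hub : ∀ i j : Fin n, (i = B ∨ i = W ∨ j = B ∨ j = W) →
      a i j ≤ p ^ (4 / ((n : ℝ) - 3) + 3))
    (y : Fin n → ℝ)
    (hyB : (n : ℝ) * y B = Real.log (∏ k, a B k))
    (hyW : (n : ℝ) * y W = Real.log (∏ k, a W k))
    (hyj : ∀ j, j ≠ B → j ≠ W → 2 * y j - y B - y W = Real.log (a j B * a j W))
    (hnorm : ∑ i, y i = 0)
    (w : Fin n → ℝ) (hw : ∀ i, w i = Real.exp (y i)) :
    ∀ j, w j ≤ w B ∧ w W ≤ w j := by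
  have hp0 : (0:ℝ) < p := lt_trans one_pos hp
  have hLp : 0 < Real.log p := Real.log_pos hp
  have hn4 : (4:ℝ) ≤ (n:ℝ) := by exact_mod_cast hn
  have hnpos : (0:ℝ) < (n:ℝ) := by linarith
  have hposB : ∀ k, 0 < a B k := fun k => hpos B k (Or.inl rfl)
  have hposW : ∀ k, 0 < a k W := fun k => hpos k W (Or.inr (Or.inr (Or.inr rfl)))
  have hposWk : ∀ k, 0 < a W k := fun k => hpos W k (Or.inr (Or.inl rfl))
  have hlogWk : ∀ k, Real.log (a W k) = - Real.log (a k W) := by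
    intro k
    have h := hrec W k (Or.inr (Or.inl rfl))
    have h2 := Real.log_mul (ne_of_gt (hposWk k)) (ne_of_gt (hposW k))
    rw [h, Real.log_one] at h2
    linarith
  have hS : (n:ℝ) * (y B - y W) = ∑ k, (Real.log (a B k) + Real.log (a k W)) := by
    have h1 : Real.log (∏ k, a B k) = ∑ k, Real.log (a B k) :=
      Real.log_prod (fun k _ => ne_of_gt (hposB k))
    have h2 : Real.log (∏ k, a W k) = ∑ k, Real.log (a W k) :=
      Real.log_prod (fun k _ => ne_of_gt (hposWk k))
    have h3 : (n:ℝ) * (y B - y W) = (n:ℝ) * y B - (n:ℝ) * y W := by ring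
    rw [h3, hyB, hyW, h1, h2, ← Finset.sum_sub_distrib]
    exact Finset.sum_congr rfl (fun k _ => by rw [hlogWk k]; ring)
  -- each summand nonnegative
  have hlogBk : ∀ k, 0 ≤ Real.log (a B k) := by
    intro k
    by_cases hk : k = B
    · subst hk; rw [hdiag, Real.log_one]
    · exact Real.log_nonneg (le_trans hp.le (hB k hk))
  have hlogkW : ∀ k, 0 ≤ Real.log (a k W) := by
    intro k
    by_cases hk : k = W
    · subst hk; rw [hdiag, Real.log_one]
    · exact Real.log_nonneg (le_trans hp.le (hW k hk))
  have hD0 : 0 ≤ y B - y W := by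
    have h : 0 ≤ (n:ℝ) * (y B - y W) := by
      rw [hS]; exact Finset.sum_nonneg (fun k _ => by linarith [hlogBk k, hlogkW k])
    nlinarith
  -- log upper bound on a B W
  have hLB : Real.log (a B W) ≤ (4 / ((n:ℝ) - 3) + 3) * Real.log p := by
    have h := hub B W (Or.inl rfl)
    calc Real.log (a B W) ≤ Real.log (p ^ (4 / ((n:ℝ) - 3) + 3)) :=
          Real.log_le_log (hposB W) h
      _ = (4 / ((n:ℝ) - 3) + 3) * Real.log p := Real.log_rpow hp0 _
  have hmain : ((n:ℝ) - 3) * Real.log (a B W) ≤ (3 * (n:ℝ) - 5) * Real.log p := by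
    have h3 : (0:ℝ) < (n:ℝ) - 3 := by linarith
    have h4 : ((n:ℝ) - 3) * (4 / ((n:ℝ) - 3)) = 4 := by field_simp
    have := mul_le_mul_of_nonneg_left hLB (le_of_lt h3)
    calc ((n:ℝ) - 3) * Real.log (a B W)
        ≤ ((n:ℝ) - 3) * ((4 / ((n:ℝ) - 3) + 3) * Real.log p) := this
      _ = (3 * (n:ℝ) - 5) * Real.log p := by linear_combination Real.log p * h4
  -- key lower bound on n * D for j ≠ B, W
  have key : ∀ j, j ≠ B → j ≠ W →
      ((n:ℝ) - 3) * (2 * Real.log p) + 2 * Real.log (a B W)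
        + (Real.log (a B j) + Real.log (a j W)) ≤ (n:ℝ) * (y B - y W) := by
    intro j hjB hjW
    rw [hS]
    have hBne : B ∉ ({W, j} : Finset (Fin n)) := by
      simp only [Finset.mem_insert, Finset.mem_singleton]
      push_neg
      exact ⟨hBW, fun h => hjB h.symm⟩
    have hWne : W ∉ ({j} : Finset (Fin n)) := by
      simp only [Finset.mem_singleton]
      exact fun h => hjW h.symm
    have hsub : ({B, W, j} : Finset (Fin n)) ⊆ univ := subset_univ _
    rw [← Finset.sum_sdiff hsub]
    have hsum3 : ∑ k ∈ ({B, W, j} : Finset (Fin n)), (Real.log (a B k) + Real.log (a k W))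
        = 2 * Real.log (a B W) + (Real.log (a B j) + Real.log (a j W)) := by
      rw [Finset.sum_insert hBne, Finset.sum_insert hWne, Finset.sum_singleton]
      rw [hdiag B, hdiag W, Real.log_one]
      ring
    have hcard : ((univ : Finset (Fin n)) \ {B, W, j}).card = n - 3 := by
      rw [Finset.card_sdiff_of_subset hsub, Finset.card_univ, Fintype.card_fin]
      congr 1
      rw [Finset.card_insert_of_notMem hBne, Finset.card_insert_of_notMem hWne,
        Finset.card_singleton]
    have hrest : ((n:ℝ) - 3) * (2 * Real.log p)
        ≤ ∑ k ∈ (univ : Finset (Fin n)) \ {B, W, j},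
            (Real.log (a B k) + Real.log (a k W)) := by
      have hb : ∀ k ∈ (univ : Finset (Fin n)) \ {B, W, j},
          2 * Real.log p ≤ Real.log (a B k) + Real.log (a k W) := by
        intro k hk
        simp only [Finset.mem_sdiff, Finset.mem_univ, Finset.mem_insert,
          Finset.mem_singleton, true_and] at hk
        push_neg at hk
        have h1 : Real.log p ≤ Real.log (a B k) := Real.log_le_log hp0 (hB k hk.1)
        have h2 : Real.log p ≤ Real.log (a k W) := Real.log_le_log hp0 (hW k hk.2.1)
        linarith
      have := Finset.card_nsmul_le_sum _ _ _ hb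
      rw [hcard] at this
      have hcast : ((n - 3 : ℕ) : ℝ) = (n:ℝ) - 3 := by
        have : (3:ℕ) ≤ n := by omega
        push_cast [this]
        ring
      calc ((n:ℝ) - 3) * (2 * Real.log p) = ((n - 3 : ℕ) : ℝ) * (2 * Real.log p) := by
            rw [hcast]
        _ = (n - 3 : ℕ) • (2 * Real.log p) := by rw [nsmul_eq_mul]
        _ ≤ _ := this
    rw [hsum3]
    linarith
  intro j
  by_cases hjB : j = B
  · subst hjB
    refine ⟨le_refl _, ?_⟩
    rw [hw, hw]
    exact Real.exp_le_exp.mpr (by linarith)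
  by_cases hjW : j = W
  · subst hjW
    refine ⟨?_, le_refl _⟩
    rw [hw, hw]
    exact Real.exp_le_exp.mpr (by linarith)
  -- main case
  have hposjB : 0 < a j B := hpos j B (Or.inr (Or.inr (Or.inl rfl)))
  have hposBj : 0 < a B j := hposB j
  have hlogjB : Real.log (a j B) = - Real.log (a B j) := by
    have h := hrec B j (Or.inl rfl)
    have h2 := Real.log_mul (ne_of_gt hposBj) (ne_of_gt hposjB)
    rw [h, Real.log_one] at h2
    linarith
  have hyje : 2 * y j - y B - y W = - Real.log (a B j) + Real.log (a j W) := by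
    rw [hyj j hjB hjW, Real.log_mul (ne_of_gt hposjB) (ne_of_gt (hposW j)), hlogjB]
  have hu : Real.log p ≤ Real.log (a B j) := Real.log_le_log hp0 (hB j hjB)
  have hv : Real.log p ≤ Real.log (a j W) := Real.log_le_log hp0 (hW j hjW)
  have huB : Real.log (a B j) ≤ Real.log (a B W) :=
    Real.log_le_log hposBj (hmaxB j hjB hjW)
  have hvB : Real.log (a j W) ≤ Real.log (a B W) :=
    Real.log_le_log (hposW j) (hmaxW j hjB hjW)
  have hk := key j hjB hjW
  set u := Real.log (a B j)
  set v := Real.log (a j W)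
  -- D ≥ v - u  and  D ≥ u - v
  have h1 : (n:ℝ) * (v - u) ≤ (n:ℝ) * (y B - y W) := by
    have e1 : ((n:ℝ) + 1) * Real.log p ≤ ((n:ℝ) + 1) * u :=
      mul_le_mul_of_nonneg_left hu (by linarith)
    have e2 : ((n:ℝ) - 1) * v ≤ ((n:ℝ) - 1) * Real.log (a B W) :=
      mul_le_mul_of_nonneg_left hvB (by linarith)
    nlinarith [hmain, hk, e1, e2]
  have h2 : (n:ℝ) * (u - v) ≤ (n:ℝ) * (y B - y W) := by
    have e1 : ((n:ℝ) + 1) * Real.log p ≤ ((n:ℝ) + 1) * v :=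
      mul_le_mul_of_nonneg_left hv (by linarith)
    have e2 : ((n:ℝ) - 1) * u ≤ ((n:ℝ) - 1) * Real.log (a B W) :=
      mul_le_mul_of_nonneg_left huB (by linarith)
    nlinarith [hmain, hk, e1, e2]
  have hd1 : v - u ≤ y B - y W := le_of_mul_le_mul_left (by linarith [h1]) hnpos
  have hd2 : u - v ≤ y B - y W := le_of_mul_le_mul_left (by linarith [h2]) hnpos
  constructor
  · rw [hw, hw]
    exact Real.exp_le_exp.mpr (by linarith [hyje, hd1])
  · rw [hw, hw]
    exact Real.exp_le_exp.mpr (by linarith [hyje, hd2])
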